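/- In the Moran process with exponential fitness, if R ≥ S and T ≥ P with at least one inequality strict, then for every i with 1 ≤ i ≤ N-1, the derivative with respect to r of the ratio p_{i,i+1}/p_{i,i-1} is strictly positive (assortment favours cooperation in the strong sense). -/

import Mathlib

/-- Proposition 1: assortment favours cooperation in the strong sense. -/
theorem assortment_strong_sense (N : ℕ) (R S T P w : ℝ)
    (hN : 2 ≤ N) (hw : 0 < w)
    (hRS : R ≥ S) (hTP : T ≥ P) (hstrict : R > S ∨ T > P) :
    ∀ i : ℕ, 1 ≤ i → i ≤ N - 1 → ∀ r ∈ Set.Icc (0 : ℝ) 1,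
      0 < deriv (fun r : ℝ => Real.exp (w *
        ((r * R + (1 - r) * ((i * R + ((N : ℝ) - i) * S) / N))
       - (r * P + (1 - r) * ((i * T + ((N : ℝ) - i) * P) / N))))) r := by
  intro i hi1 hiN r _
  set A : ℝ := (i * R + ((N : ℝ) - i) * S) / N with hA
  set B : ℝ := (i * T + ((N : ℝ) - i) * P) / N with hB
  have h1 : HasDerivAt (fun r : ℝ => r * R + (1 - r) * A) (R - A) r := by
    have := ((hasDerivAt_id r).mul_const R).add
      (((hasDerivAt_const r (1:ℝ)).sub (hasDerivAt_id r)).mul_const A)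
    exact (this.congr_deriv (by ring)).congr_of_eventuallyEq
      (Filter.Eventually.of_forall fun y => by simp only [Pi.add_apply, Pi.sub_apply, id_eq])
  have h2 : HasDerivAt (fun r : ℝ => r * P + (1 - r) * B) (P - B) r := by
    have := ((hasDerivAt_id r).mul_const P).add
      (((hasDerivAt_const r (1:ℝ)).sub (hasDerivAt_id r)).mul_const B)
    exact (this.congr_deriv (by ring)).congr_of_eventuallyEq
      (Filter.Eventually.of_forall fun y => by simp only [Pi.add_apply, Pi.sub_apply, id_eq])
  have h3 : HasDerivAt (fun r : ℝ => w *
      ((r * R + (1 - r) * A) - (r * P + (1 - r) * B)))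
      (w * ((R - A) - (P - B))) r := ((h1.sub h2).const_mul w)
  have h4 := h3.exp
  rw [h4.deriv]
  have hNpos : (0 : ℝ) < N := by positivity
  have hi1' : (1 : ℝ) ≤ (i : ℝ) := by exact_mod_cast hi1
  have hiN' : (i : ℝ) + 1 ≤ (N : ℝ) := by
    have : i + 1 ≤ N := by omega
    exact_mod_cast this
  have hNi : (1 : ℝ) ≤ (N : ℝ) - i := by linarith
  have hkey : 0 < (R - A) - (P - B) := by
    have heq : (R - A) - (P - B) =
        (((N : ℝ) - i) * (R - S) + (i : ℝ) * (T - P)) / N := by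
      rw [hA, hB]; field_simp; ring
    rw [heq]
    apply div_pos _ hNpos
    rcases hstrict with h | h
    · have h1 : 0 < ((N : ℝ) - i) * (R - S) :=
        mul_pos (by linarith) (by linarith)
      have h2 : 0 ≤ (i : ℝ) * (T - P) :=
        mul_nonneg (by linarith) (by linarith)
      linarith
    · have h1 : 0 ≤ ((N : ℝ) - i) * (R - S) :=
        mul_nonneg (by linarith) (by linarith)
      have h2 : 0 < (i : ℝ) * (T - P) :=
        mul_pos (by linarith) (by linarith)
      linarith
  positivity
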